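/- Let d > 0 be squarefree with d ≡ 2 mod 4 and let O = ℤ[√(-d)] be the ring of integers of ℚ(√(-d)). An ideal a of O is primitive (has no rational integer divisor > 1) if and only if the set {1, 2, ..., N(a)} forms a complete set of residues for O/a, where N(a) is the norm of a. -/

import Mathlib

open scoped Zsqrtd

/-- An ideal of `ℤ√d` is primitive if no rational integer `n > 1` divides it,
i.e. the ideal is not contained in `(n)` for any `n > 1`. -/
def IsPrimitiveIdeal {d : ℤ} (a : Ideal (ℤ√d)) : Prop :=
  ∀ n : ℕ, 1 < n → ¬ a ≤ Ideal.span {(n : ℤ√d)}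

/-- The norm of an ideal `a`, i.e. the cardinality of `O/a`. -/
noncomputable def idealNorm {d : ℤ} (a : Ideal (ℤ√d)) : ℕ :=
  Nat.card ((ℤ√d) ⧸ a)

private lemma aux_finite {d : ℤ} (hdneg : d < 0) (a : Ideal (ℤ√d)) (ha : a ≠ ⊥) :
    Finite ((ℤ√d) ⧸ a) := by
  obtain ⟨z, hz, hz0⟩ := (Submodule.ne_bot_iff a).mp ha
  have hm : ((z.norm : ℤ) : ℤ√d) ∈ a := by
    rw [Zsqrtd.norm_eq_mul_conj]; exact a.mul_mem_right _ hz
  have hmne : z.norm ≠ 0 := fun h => hz0 ((Zsqrtd.norm_eq_zero_iff hdneg z).mp h)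
  set n : ℕ := z.norm.natAbs with hn
  have hn0 : n ≠ 0 := Int.natAbs_ne_zero.mpr hmne
  have hna : ((n : ℤ) : ℤ√d) ∈ a := by
    rcases Int.natAbs_eq z.norm with h | h
    · rw [← h]; exact hm
    · have h2 : ((n : ℤ) : ℤ√d) = -((z.norm : ℤ) : ℤ√d) := by
        rw [show (n : ℤ) = -z.norm by omega]; push_cast; ring
      rw [h2]; exact a.neg_mem hm
  haveI : NeZero n := ⟨hn0⟩
  apply Finite.of_surjective (fun p : ZMod n × ZMod n =>
    Ideal.Quotient.mk a (⟨(p.1.val : ℤ), (p.2.val : ℤ)⟩ : ℤ√d))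
  intro q
  obtain ⟨w, rfl⟩ := Ideal.Quotient.mk_surjective q
  refine ⟨((w.re : ZMod n), (w.im : ZMod n)), ?_⟩
  rw [Ideal.Quotient.eq]
  have key : ∀ t : ℤ, (n : ℤ) ∣ (((t : ZMod n).val : ℤ) - t) := by
    intro t
    have h0 : ((((t : ZMod n).val : ℤ) - t : ℤ) : ZMod n) = 0 := by
      push_cast [ZMod.natCast_val, ZMod.intCast_cast, ZMod.intCast_zmod_cast]
      simp
    exact (ZMod.intCast_zmod_eq_zero_iff_dvd _ _).mp h0
  have hdvd : ((n : ℤ) : ℤ√d) ∣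
      ((⟨((w.re : ZMod n).val : ℤ), ((w.im : ZMod n).val : ℤ)⟩ : ℤ√d) - w) := by
    rw [Zsqrtd.intCast_dvd]
    constructor
    · simpa using key w.re
    · simpa using key w.im
  obtain ⟨u, hu⟩ := hdvd
  rw [hu]
  exact a.mul_mem_right _ hna

private lemma exists_im_one {d : ℤ} (a : Ideal (ℤ√d)) (ha : a ≠ ⊥)
    (hprim : IsPrimitiveIdeal a) : ∃ x : ℤ, (⟨x, 1⟩ : ℤ√d) ∈ a := by
  classical
  let I : Ideal ℤ :=
    { carrier := {y : ℤ | ∃ x : ℤ, (⟨x, y⟩ : ℤ√d) ∈ a}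
      add_mem' := by
        rintro y₁ y₂ ⟨x₁, h₁⟩ ⟨x₂, h₂⟩
        refine ⟨x₁ + x₂, ?_⟩
        have h := a.add_mem h₁ h₂
        have he : (⟨x₁ + x₂, y₁ + y₂⟩ : ℤ√d) = ⟨x₁, y₁⟩ + ⟨x₂, y₂⟩ := by
          rw [Zsqrtd.ext_iff]; simp
        rwa [he]
      zero_mem' := ⟨0, by
        have he : (⟨0, 0⟩ : ℤ√d) = 0 := by rw [Zsqrtd.ext_iff]; simp
        rw [he]; exact a.zero_mem⟩
      smul_mem' := by
        rintro c y ⟨x, h⟩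
        refine ⟨c * x, ?_⟩
        have h2 := a.mul_mem_left (c : ℤ√d) h
        rwa [Zsqrtd.smul_val] at h2 }
  have memI : ∀ y : ℤ, y ∈ I ↔ ∃ x : ℤ, (⟨x, y⟩ : ℤ√d) ∈ a := fun y => Iff.rfl
  obtain ⟨g, hg⟩ := (IsPrincipalIdealRing.principal I).principal
  have hgdvd : ∀ z ∈ a, g ∣ z.re ∧ g ∣ z.im := by
    intro z hz
    constructor
    · have hw : (⟨0, 1⟩ : ℤ√d) * z ∈ a := a.mul_mem_left _ hz
      have him : ((⟨0, 1⟩ : ℤ√d) * z).im = z.re := by simp [Zsqrtd.im_mul]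
      have hre : z.re ∈ I := by
        rw [memI]
        refine ⟨((⟨0, 1⟩ : ℤ√d) * z).re, ?_⟩
        have he : (⟨((⟨0, 1⟩ : ℤ√d) * z).re, z.re⟩ : ℤ√d) = (⟨0, 1⟩ : ℤ√d) * z := by
          rw [Zsqrtd.ext_iff]; exact ⟨rfl, him.symm⟩
        rwa [he]
      rwa [hg, Ideal.submodule_span_eq, Ideal.mem_span_singleton] at hre
    · have him2 : z.im ∈ I := by
        rw [memI]; exact ⟨z.re, by rwa [show (⟨z.re, z.im⟩ : ℤ√d) = z from rfl]⟩
      rwa [hg, Ideal.submodule_span_eq, Ideal.mem_span_singleton] at him2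
  have hg0 : g ≠ 0 := by
    obtain ⟨z, hz, hz0⟩ := (Submodule.ne_bot_iff a).mp ha
    rintro rfl
    obtain ⟨h1, h2⟩ := hgdvd z hz
    rw [zero_dvd_iff] at h1 h2
    exact hz0 (by rw [Zsqrtd.ext_iff]; exact ⟨h1, h2⟩)
  have hle : a ≤ Ideal.span {((g.natAbs : ℕ) : ℤ√d)} := by
    intro z hz
    rw [Ideal.mem_span_singleton, show ((g.natAbs : ℕ) : ℤ√d) = ((g.natAbs : ℤ) : ℤ√d) from
      (Int.cast_natCast _).symm, Zsqrtd.intCast_dvd]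
    exact ⟨Int.natAbs_dvd.mpr (hgdvd z hz).1, Int.natAbs_dvd.mpr (hgdvd z hz).2⟩
  have hg1 : g.natAbs = 1 := by
    by_contra h
    have h1 : 1 < g.natAbs := by
      have h0 : g.natAbs ≠ 0 := Int.natAbs_ne_zero.mpr hg0
      omega
    exact hprim g.natAbs h1 hle
  have hone : (1 : ℤ) ∈ I := by
    rw [hg, Ideal.submodule_span_eq, Ideal.mem_span_singleton]
    exact isUnit_iff_dvd_one.mp (Int.isUnit_iff.mpr (Int.natAbs_eq_iff.mp hg1))
  exact (memI 1).mp hone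

/-- For squarefree `d ≡ 2 (mod 4)`, a nonzero ideal `a` of `ℤ[√(-d)]` is primitive if
and only if `{1, ..., N(a)}` is a complete set of residues for `O/a`. -/
theorem primitive_iff_complete_residues (d : ℕ) (hd : Squarefree d) (hd4 : d % 4 = 2)
    (a : Ideal (ℤ√(-(d:ℤ)))) (ha : a ≠ ⊥) :
    IsPrimitiveIdeal a ↔
      Function.Bijective (fun i : Finset.Icc 1 (idealNorm a) =>
        Ideal.Quotient.mk a ((i : ℕ) : ℤ√(-(d:ℤ)))) := by
  have hd2 : 2 ≤ d := by omega
  have hdneg : -(d : ℤ) < 0 := by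
    have hdz : (0 : ℤ) < (d : ℤ) := by exact_mod_cast Nat.lt_of_lt_of_le Nat.zero_lt_two hd2
    omega
  haveI hfin : Finite ((ℤ√(-(d:ℤ))) ⧸ a) := aux_finite hdneg a ha
  set N := idealNorm a with hNdef
  have hN1 : 0 < N := Nat.card_pos
  have hNmem : ((N : ℤ) : ℤ√(-(d:ℤ))) ∈ a := by
    haveI := Fintype.ofFinite ((ℤ√(-(d:ℤ))) ⧸ a)
    have h0 : ((N : ℕ) : (ℤ√(-(d:ℤ))) ⧸ a) = 0 := by
      rw [hNdef, idealNorm, Nat.card_eq_fintype_card]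
      exact Nat.cast_card_eq_zero _
    have hmk : Ideal.Quotient.mk a ((N : ℤ) : ℤ√(-(d:ℤ))) = 0 := by
      push_cast
      rw [map_natCast]
      exact h0
    exact (Ideal.Quotient.eq_zero_iff_mem).mp hmk
  have hreduce : ∀ t : ℤ, ∃ i ∈ Finset.Icc 1 N,
      ((t : ℤ√(-(d:ℤ))) - ((i : ℕ) : ℤ√(-(d:ℤ)))) ∈ a := by
    intro t
    have hNz : (N : ℤ) ≠ 0 := by exact_mod_cast hN1.ne'
    have hNzpos : (0 : ℤ) < N := by exact_mod_cast hN1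
    set r := t % (N : ℤ) with hr
    have hr0 : 0 ≤ r := Int.emod_nonneg t hNz
    have hrN : r < N := Int.emod_lt_of_pos t hNzpos
    have hmod : t - r = (N : ℤ) * (t / N) := by
      rw [hr, Int.emod_def]; ring
    by_cases h : r = 0
    · refine ⟨N, by rw [Finset.mem_Icc]; omega, ?_⟩
      have heq : t - (N : ℤ) = (N : ℤ) * (t / N - 1) := by
        rw [mul_sub, ← hmod, h]; ring
      have hm : ((t - (N : ℤ) : ℤ) : ℤ√(-(d:ℤ))) ∈ a := by
        rw [heq]; push_cast
        exact a.mul_mem_right _ hNmem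
      have he : ((t - (N : ℤ) : ℤ) : ℤ√(-(d:ℤ)))
          = (t : ℤ√(-(d:ℤ))) - ((N : ℕ) : ℤ√(-(d:ℤ))) := by push_cast; ring
      rwa [he] at hm
    · refine ⟨r.toNat, ?_, ?_⟩
      · rw [Finset.mem_Icc]; omega
      · have hiN : ((r.toNat : ℕ) : ℤ) = r := Int.toNat_of_nonneg hr0
        have hm : ((t - r : ℤ) : ℤ√(-(d:ℤ))) ∈ a := by
          rw [hmod]; push_cast
          exact a.mul_mem_right _ hNmem
        have he : ((t - r : ℤ) : ℤ√(-(d:ℤ)))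
            = (t : ℤ√(-(d:ℤ))) - ((r.toNat : ℕ) : ℤ√(-(d:ℤ))) := by
          rw [show ((r.toNat : ℕ) : ℤ√(-(d:ℤ))) = ((r.toNat : ℤ) : ℤ√(-(d:ℤ))) from
            (Int.cast_natCast _).symm, hiN]
          push_cast
          ring
        rwa [he] at hm
  constructor
  · intro hprim
    obtain ⟨x, hx⟩ := exists_im_one a ha hprim
    rw [Nat.bijective_iff_surjective_and_card]
    constructor
    · intro q
      obtain ⟨z, rfl⟩ := Ideal.Quotient.mk_surjective q
      set t : ℤ := z.re - z.im * x with ht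
      have hzt : ((t : ℤ√(-(d:ℤ))) - z) ∈ a := by
        have hm : (z.im : ℤ√(-(d:ℤ))) * ⟨x, 1⟩ ∈ a := a.mul_mem_left _ hx
        rw [Zsqrtd.smul_val] at hm
        have he : (⟨z.im * x, z.im * 1⟩ : ℤ√(-(d:ℤ))) = z - (t : ℤ√(-(d:ℤ))) := by
          rw [Zsqrtd.ext_iff, Zsqrtd.re_sub, Zsqrtd.im_sub, Zsqrtd.re_intCast,
            Zsqrtd.im_intCast, ht]
          constructor
          · ring
          · ring
        rw [he] at hm
        have hm2 := a.neg_mem hm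
        rwa [neg_sub] at hm2
      obtain ⟨i, hi, hia⟩ := hreduce t
      refine ⟨⟨i, hi⟩, ?_⟩
      have h1 : Ideal.Quotient.mk a ((i : ℕ) : ℤ√(-(d:ℤ)))
          = Ideal.Quotient.mk a ((t : ℤ) : ℤ√(-(d:ℤ))) := by
        rw [Ideal.Quotient.eq]
        have hm3 := a.neg_mem hia
        rwa [neg_sub] at hm3
      have h2 : Ideal.Quotient.mk a ((t : ℤ) : ℤ√(-(d:ℤ))) = Ideal.Quotient.mk a z := by
        rw [Ideal.Quotient.eq]
        exact hzt
      simpa using h1.trans h2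
    · rw [Nat.card_eq_finsetCard, Nat.card_Icc]
      simp [hNdef, idealNorm]
  · intro hbij n hn hle
    obtain ⟨⟨k, hk⟩, hkq⟩ := hbij.2 (Ideal.Quotient.mk a (⟨0, 1⟩ : ℤ√(-(d:ℤ))))
    have hkq' : Ideal.Quotient.mk a ((k : ℕ) : ℤ√(-(d:ℤ)))
        = Ideal.Quotient.mk a (⟨0, 1⟩ : ℤ√(-(d:ℤ))) := hkq
    rw [Ideal.Quotient.eq] at hkq'
    have hd' := hle hkq'
    rw [Ideal.mem_span_singleton,
      show ((n : ℕ) : ℤ√(-(d:ℤ))) = ((n : ℤ) : ℤ√(-(d:ℤ))) from (Int.cast_natCast _).symm,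
      Zsqrtd.intCast_dvd] at hd'
    have him : (((k : ℕ) : ℤ√(-(d:ℤ))) - ⟨0, 1⟩).im = -1 := by simp
    have hnd := hd'.2
    rw [him] at hnd
    have hnd1 : (n : ℤ) ∣ 1 := (dvd_neg).mp hnd
    have : (n : ℤ) ≤ 1 := Int.le_of_dvd one_pos hnd1
    omega
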